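/- Under the stated assumptions on σ and ε₀, the solution v of the three-level method satisfies the strong energy stability bound: for every m with 1 ≤ m ≤ M, ‖δ̄ₜv^m‖_B² + (σ − 1/4)hₜ²‖δ̄ₜv^m‖_A² + ‖s̄ₜv^m‖_A² ≤ ( (‖v⁰‖_A² + ε₀⁻²⟨B⁻¹u₁, u₁⟩)^{1/2} + 2ε₀⁻¹ [ (1/4)hₜ⟨B⁻¹f⁰, f⁰⟩^{1/2} + hₜ Σ_{l=1}^{M−1} ⟨B⁻¹f^l, f^l⟩^{1/2} ] )². -/
import Mathlib

open scoped RealInnerProductSpace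

section AuxStmt0
variable {H : Type*} [NormedAddCommGroup H] [InnerProductSpace ℝ H]

private lemma stmt0_swap (A : H →ₗ[ℝ] H) (hAsym : ∀ x y : H, ⟪A x, y⟫ = ⟪x, A y⟫)
    (x y : H) : ⟪A x, y⟫ = ⟪A y, x⟫ := by
  rw [hAsym, real_inner_comm]

private lemma stmt0_cs (A : H →ₗ[ℝ] H) (hAsym : ∀ x y : H, ⟪A x, y⟫ = ⟪x, A y⟫)
    (hAnn : ∀ x : H, 0 ≤ ⟪A x, x⟫) (x y : H) :
    ⟪A x, y⟫ ≤ Real.sqrt ⟪A x, x⟫ * Real.sqrt ⟪A y, y⟫ := by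
  have key : ∀ t : ℝ, 0 ≤ ⟪A y, y⟫ * (t * t) + (2 * ⟪A x, y⟫) * t + ⟪A x, x⟫ := by
    intro t
    have h1 : ⟪A (x + t • y), x + t • y⟫
        = ⟪A y, y⟫ * (t * t) + (2 * ⟪A x, y⟫) * t + ⟪A x, x⟫ := by
      simp only [map_add, map_smul, inner_add_left, inner_add_right,
        real_inner_smul_left, real_inner_smul_right]
      rw [stmt0_swap A hAsym y x]
      ring
    have h0 := hAnn (x + t • y)
    rw [h1] at h0
    exact h0
  have hd := discrim_le_zero key
  rw [discrim] at hd
  have hq : ⟪A x, y⟫ ^ 2 ≤ ⟪A x, x⟫ * ⟪A y, y⟫ := by nlinarith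
  calc ⟪A x, y⟫ ≤ |⟪A x, y⟫| := le_abs_self _
    _ = Real.sqrt (⟪A x, y⟫ ^ 2) := (Real.sqrt_sq_eq_abs _).symm
    _ ≤ Real.sqrt (⟪A x, x⟫ * ⟪A y, y⟫) := Real.sqrt_le_sqrt hq
    _ = _ := Real.sqrt_mul (hAnn x) _

private lemma stmt0_two_cs (p q r s : ℝ) :
    p * q + r * s ≤ Real.sqrt (p^2 + r^2) * Real.sqrt (q^2 + s^2) := by
  have h1 : (p*q + r*s)^2 ≤ (p^2 + r^2) * (q^2 + s^2) := by nlinarith [sq_nonneg (p*s - r*q)]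
  calc p*q + r*s ≤ |p*q + r*s| := le_abs_self _
    _ = Real.sqrt ((p*q + r*s)^2) := (Real.sqrt_sq_eq_abs _).symm
    _ ≤ Real.sqrt ((p^2 + r^2) * (q^2 + s^2)) := Real.sqrt_le_sqrt h1
    _ = _ := Real.sqrt_mul (by positivity) _

private lemma stmt0_sq_le {a q : ℝ} (hq : 0 ≤ q) (h : a^2 ≤ q * a) : a ≤ q := by
  by_contra hc
  push_neg at hc
  nlinarith

private lemma stmt0_step_scalar {a b c : ℝ} (ha : 0 ≤ a) (hb : 0 ≤ b) (hc : 0 ≤ c)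
    (h : a^2 ≤ b^2 + c * (a + b)) : a ≤ b + c := by
  by_contra hcon
  push_neg at hcon
  nlinarith

private lemma stmt0_step_id (B A : H →ₗ[ℝ] H)
    (hBsym : ∀ x y : H, ⟪B x, y⟫ = ⟪x, B y⟫)
    (hAsym : ∀ x y : H, ⟪A x, y⟫ = ⟪x, A y⟫)
    (σ h : ℝ) (hh : h ≠ 0) (x1 x2 x3 g : H)
    (heq : B ((h^2)⁻¹ • (x3 - (2:ℝ) • x2 + x1))
      + (σ * h^2) • A ((h^2)⁻¹ • (x3 - (2:ℝ) • x2 + x1)) + A x2 = g) :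
    (⟪B (h⁻¹ • (x3 - x2)), h⁻¹ • (x3 - x2)⟫
      + (σ - 1/4) * h^2 * ⟪A (h⁻¹ • (x3 - x2)), h⁻¹ • (x3 - x2)⟫
      + ⟪A ((1/2:ℝ) • (x2 + x3)), (1/2:ℝ) • (x2 + x3)⟫)
    - (⟪B (h⁻¹ • (x2 - x1)), h⁻¹ • (x2 - x1)⟫
      + (σ - 1/4) * h^2 * ⟪A (h⁻¹ • (x2 - x1)), h⁻¹ • (x2 - x1)⟫
      + ⟪A ((1/2:ℝ) • (x1 + x2)), (1/2:ℝ) • (x1 + x2)⟫)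
    = h * ⟪g, h⁻¹ • (x3 - x2) + h⁻¹ • (x2 - x1)⟫ := by
  subst heq
  simp only [map_add, map_sub, map_smul, smul_sub, smul_add, inner_add_left,
    inner_add_right, inner_sub_left, inner_sub_right, real_inner_smul_left,
    real_inner_smul_right]
  simp only [stmt0_swap B hBsym x2 x1, stmt0_swap B hBsym x3 x1, stmt0_swap B hBsym x3 x2,
    stmt0_swap A hAsym x2 x1, stmt0_swap A hAsym x3 x1, stmt0_swap A hAsym x3 x2]
  field_simp
  ring

private lemma stmt0_init_id (B A : H →ₗ[ℝ] H)
    (hBsym : ∀ x y : H, ⟪B x, y⟫ = ⟪x, B y⟫)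
    (hAsym : ∀ x y : H, ⟪A x, y⟫ = ⟪x, A y⟫)
    (σ h : ℝ) (hh : h ≠ 0) (x0 x1 u : H)
    (heq : B (h⁻¹ • (x1 - x0)) + (σ * h^2) • A (h⁻¹ • (x1 - x0))
      + ((1/2) * h) • A x0 = u) :
    ⟪B (h⁻¹ • (x1 - x0)), h⁻¹ • (x1 - x0)⟫
      + (σ - 1/4) * h^2 * ⟪A (h⁻¹ • (x1 - x0)), h⁻¹ • (x1 - x0)⟫
      + ⟪A ((1/2:ℝ) • (x0 + x1)), (1/2:ℝ) • (x0 + x1)⟫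
    = ⟪u, h⁻¹ • (x1 - x0)⟫ + ⟪A x0, (1/2:ℝ) • (x0 + x1)⟫ := by
  subst heq
  simp only [map_add, map_sub, map_smul, smul_sub, smul_add, inner_add_left,
    inner_add_right, inner_sub_left, inner_sub_right, real_inner_smul_left,
    real_inner_smul_right]
  simp only [stmt0_swap B hBsym x1 x0, stmt0_swap A hAsym x1 x0]
  field_simp
  ring

/-- discrete energy -/
private noncomputable def stmt0_E (B A : H →ₗ[ℝ] H) (σ ht : ℝ) (v : ℕ → H) (m : ℕ) : ℝ :=
  ⟪B (ht⁻¹ • (v m - v (m-1))), ht⁻¹ • (v m - v (m-1))⟫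
    + (σ - 1/4) * ht^2 * ⟪A (ht⁻¹ • (v m - v (m-1))), ht⁻¹ • (v m - v (m-1))⟫
    + ⟪A ((1/2 : ℝ) • (v (m-1) + v m)), (1/2 : ℝ) • (v (m-1) + v m)⟫

end AuxStmt0

set_option maxHeartbeats 2000000 in
/-- strong energy stability bound for the symmetric three-level method with
weight σ.  Here `Bi` is the inverse operator of `B`. -/
theorem stmt_0
    {H : Type*} [NormedAddCommGroup H] [InnerProductSpace ℝ H] [FiniteDimensional ℝ H]
    (B A Bi : H →ₗ[ℝ] H)
    (hBsym : ∀ x y : H, ⟪B x, y⟫ = ⟪x, B y⟫)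
    (hBpos : ∀ x : H, x ≠ 0 → 0 < ⟪B x, x⟫)
    (hAsym : ∀ x y : H, ⟪A x, y⟫ = ⟪x, A y⟫)
    (hApos : ∀ x : H, x ≠ 0 → 0 < ⟪A x, x⟫)
    (hBi : ∀ x : H, B (Bi x) = x)
    (T : ℝ) (hT : 0 < T) (M : ℕ) (hM : 2 ≤ M) (ht : ℝ) (hht : ht = T / M)
    (σ ε₀ : ℝ)
    (hσ : (1/4 ≤ σ ∧ ε₀ = 1) ∨
      (σ < 1/4 ∧ 0 < ε₀ ∧ ε₀ < 1 ∧ ∃ α : ℝ, 0 < α ∧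
        (∀ w : H, ⟪A w, w⟫ ≤ α^2 * ⟪B w, w⟫) ∧
        (1/4 - σ) * ht^2 * α^2 ≤ 1 - ε₀^2))
    (v : ℕ → H) (u₁ : H) (f : ℕ → H)
    (heq : ∀ m : ℕ, 1 ≤ m → m ≤ M - 1 →
      B ((ht^2)⁻¹ • (v (m+1) - (2:ℝ) • v m + v (m-1)))
        + (σ * ht^2) • A ((ht^2)⁻¹ • (v (m+1) - (2:ℝ) • v m + v (m-1)))
        + A (v m) = f m)
    (hinit : B (ht⁻¹ • (v 1 - v 0)) + (σ * ht^2) • A (ht⁻¹ • (v 1 - v 0))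
        + ((1/2) * ht) • A (v 0) = u₁ + ((1/2) * ht) • f 0) :
    ∀ m : ℕ, 1 ≤ m → m ≤ M →
      ⟪B (ht⁻¹ • (v m - v (m-1))), ht⁻¹ • (v m - v (m-1))⟫
        + (σ - 1/4) * ht^2 * ⟪A (ht⁻¹ • (v m - v (m-1))), ht⁻¹ • (v m - v (m-1))⟫
        + ⟪A ((1/2 : ℝ) • (v (m-1) + v m)), (1/2 : ℝ) • (v (m-1) + v m)⟫
      ≤ (Real.sqrt (⟪A (v 0), v 0⟫ + ε₀⁻¹^2 * ⟪Bi u₁, u₁⟫)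
          + 2 * ε₀⁻¹ * ((1/4) * ht * Real.sqrt ⟪Bi (f 0), f 0⟫
            + ht * ∑ l ∈ Finset.Icc 1 (M-1), Real.sqrt ⟪Bi (f l), f l⟫))^2 := by
  have hMpos : 0 < M := by omega
  have hht0 : (0:ℝ) < ht := by
    rw [hht]
    exact div_pos hT (by exact_mod_cast hMpos)
  have hhne : ht ≠ 0 := ne_of_gt hht0
  have hBnn : ∀ x : H, 0 ≤ ⟪B x, x⟫ := by
    intro x
    rcases eq_or_ne x 0 with h | h
    · simp [h]
    · exact (hBpos x h).le
  have hAnn : ∀ x : H, 0 ≤ ⟪A x, x⟫ := by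
    intro x
    rcases eq_or_ne x 0 with h | h
    · simp [h]
    · exact (hApos x h).le
  have hBinn : ∀ g : H, 0 ≤ ⟪Bi g, g⟫ := by
    intro g
    have h0 := hBnn (Bi g)
    rwa [real_inner_comm, hBi] at h0
  have hε0 : 0 < ε₀ := by
    rcases hσ with ⟨_, h1⟩ | ⟨_, h1, _⟩
    · rw [h1]; norm_num
    · exact h1
  have hεinv : (0:ℝ) ≤ ε₀⁻¹ := by positivity
  have hεinv' : ε₀⁻¹ * ε₀ = 1 := inv_mul_cancel₀ (ne_of_gt hε0)
  -- the C-form lower bound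
  have hC : ∀ w : H, ε₀^2 * ⟪B w, w⟫ ≤ ⟪B w, w⟫ + (σ - 1/4) * ht^2 * ⟪A w, w⟫ := by
    intro w
    rcases hσ with ⟨h14, h1⟩ | ⟨h14, _, _, α, hα, hαB, hε⟩
    · rw [h1]
      have h2 : (0:ℝ) ≤ (σ - 1/4) * ht^2 * ⟪A w, w⟫ :=
        mul_nonneg (mul_nonneg (by linarith) (sq_nonneg ht)) (hAnn w)
      nlinarith [hBnn w]
    · have h2 : (0:ℝ) ≤ (1/4 - σ) * ht^2 := by nlinarith [sq_nonneg ht]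
      have h3 := mul_le_mul_of_nonneg_left (hαB w) h2
      have h4 := mul_le_mul_of_nonneg_right hε (hBnn w)
      nlinarith
  -- duality Cauchy–Schwarz
  have hdual : ∀ g w : H, ⟪g, w⟫ ≤ Real.sqrt ⟪Bi g, g⟫ * Real.sqrt ⟪B w, w⟫ := by
    intro g w
    have h2 := stmt0_cs B hBsym hBnn (Bi g) w
    have h3 : ⟪B (Bi g), Bi g⟫ = ⟪Bi g, g⟫ := by rw [real_inner_comm, hBi]
    rw [h3, hBi] at h2
    exact h2
  -- lower bound on the energy
  have hEnn : ∀ m : ℕ,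
      ε₀^2 * ⟪B (ht⁻¹ • (v m - v (m-1))), ht⁻¹ • (v m - v (m-1))⟫
        + ⟪A ((1/2 : ℝ) • (v (m-1) + v m)), (1/2 : ℝ) • (v (m-1) + v m)⟫
      ≤ stmt0_E B A σ ht v m := by
    intro m
    have := hC (ht⁻¹ • (v m - v (m-1)))
    unfold stmt0_E
    linarith
  have hE0 : ∀ m : ℕ, 0 ≤ stmt0_E B A σ ht v m := by
    intro m
    have h1 := hEnn m
    nlinarith [hBnn (ht⁻¹ • (v m - v (m-1))), hAnn ((1/2 : ℝ) • (v (m-1) + v m)),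
      sq_nonneg ε₀]
  have hEsq : ∀ m : ℕ, Real.sqrt (stmt0_E B A σ ht v m) ^ 2 = stmt0_E B A σ ht v m :=
    fun m => Real.sq_sqrt (hE0 m)
  -- B-norm of backward difference controlled by the energy
  have hb : ∀ m : ℕ,
      Real.sqrt ⟪B (ht⁻¹ • (v m - v (m-1))), ht⁻¹ • (v m - v (m-1))⟫
        ≤ ε₀⁻¹ * Real.sqrt (stmt0_E B A σ ht v m) := by
    intro m
    have h1 := hEnn m
    have hA0 := hAnn ((1/2 : ℝ) • (v (m-1) + v m))
    have h3 : ε₀^2 * ⟪B (ht⁻¹ • (v m - v (m-1))), ht⁻¹ • (v m - v (m-1))⟫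
        ≤ stmt0_E B A σ ht v m := by linarith
    have h2 : ⟪B (ht⁻¹ • (v m - v (m-1))), ht⁻¹ • (v m - v (m-1))⟫
        ≤ (ε₀⁻¹ * Real.sqrt (stmt0_E B A σ ht v m))^2 := by
      have he : ε₀⁻¹^2 * ε₀^2 = 1 := by
        rw [← mul_pow, hεinv']; norm_num
      calc ⟪B (ht⁻¹ • (v m - v (m-1))), ht⁻¹ • (v m - v (m-1))⟫
          = ε₀⁻¹^2 * (ε₀^2 * ⟪B (ht⁻¹ • (v m - v (m-1))), ht⁻¹ • (v m - v (m-1))⟫) := by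
            rw [← mul_assoc, he, one_mul]
        _ ≤ ε₀⁻¹^2 * stmt0_E B A σ ht v m :=
            mul_le_mul_of_nonneg_left h3 (by positivity)
        _ = (ε₀⁻¹ * Real.sqrt (stmt0_E B A σ ht v m))^2 := by rw [mul_pow, hEsq]
    have h4 := Real.sqrt_le_sqrt h2
    rwa [Real.sqrt_sq (mul_nonneg hεinv (Real.sqrt_nonneg _))] at h4
  -- initial-energy bound
  have ha1 : Real.sqrt (stmt0_E B A σ ht v 1)
      ≤ Real.sqrt (⟪A (v 0), v 0⟫ + ε₀⁻¹^2 * ⟪Bi u₁, u₁⟫)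
        + ε₀⁻¹ * ((1/2) * ht * Real.sqrt ⟪Bi (f 0), f 0⟫) := by
    have hid := stmt0_init_id B A hBsym hAsym σ ht hhne (v 0) (v 1)
      (u₁ + ((1/2) * ht) • f 0) hinit
    have hE1 : stmt0_E B A σ ht v 1
        = ⟪u₁, ht⁻¹ • (v 1 - v 0)⟫ + (1/2) * ht * ⟪f 0, ht⁻¹ • (v 1 - v 0)⟫
          + ⟪A (v 0), (1/2 : ℝ) • (v 0 + v 1)⟫ := by
      have hexp : ⟪u₁ + ((1/2) * ht) • f 0, ht⁻¹ • (v 1 - v 0)⟫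
          = ⟪u₁, ht⁻¹ • (v 1 - v 0)⟫ + (1/2) * ht * ⟪f 0, ht⁻¹ • (v 1 - v 0)⟫ := by
        rw [inner_add_left, real_inner_smul_left]
      unfold stmt0_E
      simp only [show (1:ℕ) - 1 = 0 from rfl]
      rw [hid, hexp]
    have h1 := hdual u₁ (ht⁻¹ • (v 1 - v 0))
    have h2 := hdual (f 0) (ht⁻¹ • (v 1 - v 0))
    have h3 := stmt0_cs A hAsym hAnn (v 0) ((1/2 : ℝ) • (v 0 + v 1))
    -- abbreviations (as plain terms)
    have h4 := stmt0_two_cs (Real.sqrt ⟪A (v 0), v 0⟫)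
      (Real.sqrt ⟪A ((1/2 : ℝ) • (v 0 + v 1)), (1/2 : ℝ) • (v 0 + v 1)⟫)
      (ε₀⁻¹ * Real.sqrt ⟪Bi u₁, u₁⟫)
      (ε₀ * Real.sqrt ⟪B (ht⁻¹ • (v 1 - v 0)), ht⁻¹ • (v 1 - v 0)⟫)
    have h5 : Real.sqrt ⟪A ((1/2 : ℝ) • (v 0 + v 1)), (1/2 : ℝ) • (v 0 + v 1)⟫ ^ 2
        + (ε₀ * Real.sqrt ⟪B (ht⁻¹ • (v 1 - v 0)), ht⁻¹ • (v 1 - v 0)⟫) ^ 2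
        ≤ stmt0_E B A σ ht v 1 := by
      have h5' := hEnn 1
      simp only [show (1:ℕ) - 1 = 0 from rfl] at h5'
      rw [Real.sq_sqrt (hAnn _), mul_pow, Real.sq_sqrt (hBnn _)]
      linarith
    have h6 : Real.sqrt ⟪A (v 0), v 0⟫ ^ 2 + (ε₀⁻¹ * Real.sqrt ⟪Bi u₁, u₁⟫) ^ 2
        = ⟪A (v 0), v 0⟫ + ε₀⁻¹^2 * ⟪Bi u₁, u₁⟫ := by
      rw [Real.sq_sqrt (hAnn _), mul_pow, Real.sq_sqrt (hBinn _)]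
    have h7 := Real.sqrt_le_sqrt h5
    rw [h6] at h4
    have h8 : Real.sqrt ⟪Bi u₁, u₁⟫
          * Real.sqrt ⟪B (ht⁻¹ • (v 1 - v 0)), ht⁻¹ • (v 1 - v 0)⟫
        = (ε₀⁻¹ * Real.sqrt ⟪Bi u₁, u₁⟫)
          * (ε₀ * Real.sqrt ⟪B (ht⁻¹ • (v 1 - v 0)), ht⁻¹ • (v 1 - v 0)⟫) := by
      rw [mul_mul_mul_comm, hεinv', one_mul]
    have h9 := hb 1
    simp only [show (1:ℕ) - 1 = 0 from rfl] at h9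
    have h11 : Real.sqrt (⟪A (v 0), v 0⟫ + ε₀⁻¹^2 * ⟪Bi u₁, u₁⟫)
          * Real.sqrt (Real.sqrt ⟪A ((1/2 : ℝ) • (v 0 + v 1)), (1/2 : ℝ) • (v 0 + v 1)⟫ ^ 2
            + (ε₀ * Real.sqrt ⟪B (ht⁻¹ • (v 1 - v 0)), ht⁻¹ • (v 1 - v 0)⟫) ^ 2)
        ≤ Real.sqrt (⟪A (v 0), v 0⟫ + ε₀⁻¹^2 * ⟪Bi u₁, u₁⟫)
          * Real.sqrt (stmt0_E B A σ ht v 1) :=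
      mul_le_mul_of_nonneg_left h7 (Real.sqrt_nonneg _)
    have h12 := mul_le_mul_of_nonneg_left h2 (by positivity : (0:ℝ) ≤ (1/2) * ht)
    have h13 := mul_le_mul_of_nonneg_left h9 (Real.sqrt_nonneg ⟪Bi (f 0), f 0⟫)
    have h13' := mul_le_mul_of_nonneg_left h13 (by positivity : (0:ℝ) ≤ (1/2) * ht)
    have h10 : stmt0_E B A σ ht v 1
        ≤ (Real.sqrt (⟪A (v 0), v 0⟫ + ε₀⁻¹^2 * ⟪Bi u₁, u₁⟫)
            + ε₀⁻¹ * ((1/2) * ht * Real.sqrt ⟪Bi (f 0), f 0⟫))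
          * Real.sqrt (stmt0_E B A σ ht v 1) := by
      linarith [hE1, h1, h3, h4, h8, h11, h12, h13']
    have hqn : (0:ℝ) ≤ Real.sqrt (⟪A (v 0), v 0⟫ + ε₀⁻¹^2 * ⟪Bi u₁, u₁⟫)
        + ε₀⁻¹ * ((1/2) * ht * Real.sqrt ⟪Bi (f 0), f 0⟫) := by
      exact add_nonneg (Real.sqrt_nonneg _)
        (mul_nonneg hεinv (mul_nonneg (by linarith : (0:ℝ) ≤ (1/2) * ht)
          (Real.sqrt_nonneg _)))
    refine stmt0_sq_le hqn ?_
    rw [hEsq 1]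
    exact h10
  -- one-step bound
  have hstep : ∀ m : ℕ, 1 ≤ m → m + 1 ≤ M →
      Real.sqrt (stmt0_E B A σ ht v (m+1))
        ≤ Real.sqrt (stmt0_E B A σ ht v m)
          + ht * ε₀⁻¹ * Real.sqrt ⟪Bi (f m), f m⟫ := by
    intro m hm1 hmM
    have heqm := heq m hm1 (by omega)
    have hid := stmt0_step_id B A hBsym hAsym σ ht hhne (v (m-1)) (v m) (v (m+1)) (f m) heqm
    have hEdiff : stmt0_E B A σ ht v (m+1) - stmt0_E B A σ ht v m
        = ht * ⟪f m, ht⁻¹ • (v (m+1) - v m) + ht⁻¹ • (v m - v (m-1))⟫ := by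
      unfold stmt0_E
      simp only [Nat.add_sub_cancel]
      exact hid
    have hsplit : ⟪f m, ht⁻¹ • (v (m+1) - v m) + ht⁻¹ • (v m - v (m-1))⟫
        = ⟪f m, ht⁻¹ • (v (m+1) - v m)⟫ + ⟪f m, ht⁻¹ • (v m - v (m-1))⟫ :=
      inner_add_right _ _ _
    have hfd1 : ⟪f m, ht⁻¹ • (v (m+1) - v m)⟫
        ≤ Real.sqrt ⟪Bi (f m), f m⟫
          * Real.sqrt ⟪B (ht⁻¹ • (v (m+1) - v m)), ht⁻¹ • (v (m+1) - v m)⟫ :=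
      hdual _ _
    have hfd2 : ⟪f m, ht⁻¹ • (v m - v (m-1))⟫
        ≤ Real.sqrt ⟪Bi (f m), f m⟫
          * Real.sqrt ⟪B (ht⁻¹ • (v m - v (m-1))), ht⁻¹ • (v m - v (m-1))⟫ :=
      hdual _ _
    have hβ1 := hb (m+1)
    simp only [Nat.add_sub_cancel] at hβ1
    have hβ2 := hb m
    have hFm : (0:ℝ) ≤ Real.sqrt ⟪Bi (f m), f m⟫ := Real.sqrt_nonneg _
    have hm1' := mul_le_mul_of_nonneg_left hβ1 hFm
    have hm2' := mul_le_mul_of_nonneg_left hβ2 hFm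
    have hm1'' := mul_le_mul_of_nonneg_left hm1' hht0.le
    have hm2'' := mul_le_mul_of_nonneg_left hm2' hht0.le
    have hd1' := mul_le_mul_of_nonneg_left hfd1 hht0.le
    have hd2' := mul_le_mul_of_nonneg_left hfd2 hht0.le
    refine stmt0_step_scalar (Real.sqrt_nonneg _) (Real.sqrt_nonneg _)
      (by positivity) ?_
    rw [hEsq (m+1), hEsq m]
    rw [hsplit] at hEdiff
    linarith [hEdiff, hd1', hd2', hm1'', hm2'']
  -- discrete Gronwall by induction
  have main : ∀ m : ℕ, 1 ≤ m → m ≤ M →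
      Real.sqrt (stmt0_E B A σ ht v m)
        ≤ Real.sqrt (stmt0_E B A σ ht v 1)
          + ht * ε₀⁻¹ * ∑ l ∈ Finset.Icc 1 (m-1), Real.sqrt ⟪Bi (f l), f l⟫ := by
    intro m hm1
    induction m, hm1 using Nat.le_induction with
    | base =>
      intro _
      simp
    | succ n hn ih =>
      intro hnM
      obtain ⟨p, rfl⟩ : ∃ p, n = p + 1 := ⟨n - 1, by omega⟩
      have h1 := ih (by omega)
      have h2 := hstep (p+1) (by omega) (by omega)
      simp only [Nat.add_sub_cancel] at h1 ⊢
      rw [Finset.sum_Icc_succ_top (by omega : 1 ≤ p + 1)]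
      have hF : (0:ℝ) ≤ Real.sqrt ⟪Bi (f (p+1)), f (p+1)⟫ := Real.sqrt_nonneg _
      nlinarith [mul_nonneg (mul_nonneg hht0.le hεinv) hF]
  -- conclusion
  intro m hm1 hmM
  have h1 := main m hm1 hmM
  have hsub : ∑ l ∈ Finset.Icc 1 (m-1), Real.sqrt ⟪Bi (f l), f l⟫
      ≤ ∑ l ∈ Finset.Icc 1 (M-1), Real.sqrt ⟪Bi (f l), f l⟫ :=
    Finset.sum_le_sum_of_subset_of_nonneg
      (Finset.Icc_subset_Icc_right (by omega)) (fun i _ _ => Real.sqrt_nonneg _)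
  have hSnnM : (0:ℝ) ≤ ∑ l ∈ Finset.Icc 1 (M-1), Real.sqrt ⟪Bi (f l), f l⟫ :=
    Finset.sum_nonneg fun i _ => Real.sqrt_nonneg _
  have hsub' := mul_le_mul_of_nonneg_left hsub (mul_nonneg hht0.le hεinv)
  have hK : Real.sqrt (stmt0_E B A σ ht v m)
      ≤ Real.sqrt (⟪A (v 0), v 0⟫ + ε₀⁻¹^2 * ⟪Bi u₁, u₁⟫)
        + 2 * ε₀⁻¹ * ((1/4) * ht * Real.sqrt ⟪Bi (f 0), f 0⟫
          + ht * ∑ l ∈ Finset.Icc 1 (M-1), Real.sqrt ⟪Bi (f l), f l⟫) := by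
    nlinarith [h1, ha1, hsub', mul_nonneg (mul_nonneg hht0.le hεinv) hSnnM]
  have hKnn : (0:ℝ) ≤ Real.sqrt (⟪A (v 0), v 0⟫ + ε₀⁻¹^2 * ⟪Bi u₁, u₁⟫)
      + 2 * ε₀⁻¹ * ((1/4) * ht * Real.sqrt ⟪Bi (f 0), f 0⟫
        + ht * ∑ l ∈ Finset.Icc 1 (M-1), Real.sqrt ⟪Bi (f l), f l⟫) := by
    have hq0 := Real.sqrt_nonneg (⟪A (v 0), v 0⟫ + ε₀⁻¹^2 * ⟪Bi u₁, u₁⟫)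
    have hf0 := Real.sqrt_nonneg ⟪Bi (f 0), f 0⟫
    nlinarith [mul_nonneg hht0.le hf0, mul_nonneg hht0.le hSnnM, hεinv]
  have hfin := pow_le_pow_left₀ (Real.sqrt_nonneg _) hK 2
  rw [hEsq m] at hfin
  exact hfin
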